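/- Let A₀,...,A_l and A'₀,...,A'_l be n×n real matrices, ε_A ≥ 0 and M ≥ 0 constants such that ‖A_i − A'_i‖ ≤ ε_A and ‖A'_i‖ ≤ M for all i, and let D > 0 and 0 = s₀ ≤ s₁ ≤ ... ≤ s_{k+1} = D be real numbers. Then for every k ≥ 0, ‖∏_{n=1}^{k+1} exp(A_{m_n}(s_n − s_{n−1})) − ∏_{n=1}^{k+1} exp(A'_{m_n}(s_n − s_{n−1}))‖ ≤ ε_A · (k+1) · D · exp(M·s_{k+1}) · exp(ε_A·D), for any choice of indices m_1,...,m_{k+1} ∈ {0,...,l}. -/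

import Mathlib

open NormedSpace

section AuxLemmas

variable {𝔸 : Type*} [NormedRing 𝔸] [NormedAlgebra ℝ 𝔸] [CompleteSpace 𝔸]

lemma aux_norm_pow_mul_le (x z : 𝔸) : ∀ n : ℕ, ‖x ^ n * z‖ ≤ ‖x‖ ^ n * ‖z‖
  | 0 => by simp
  | n + 1 => by
    calc ‖x ^ (n + 1) * z‖ = ‖x * (x ^ n * z)‖ := by rw [pow_succ', mul_assoc]
      _ ≤ ‖x‖ * ‖x ^ n * z‖ := norm_mul_le _ _
      _ ≤ ‖x‖ * (‖x‖ ^ n * ‖z‖) := by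
          exact mul_le_mul_of_nonneg_left (aux_norm_pow_mul_le x z n) (norm_nonneg _)
      _ = ‖x‖ ^ (n + 1) * ‖z‖ := by ring

lemma aux_norm_exp_mul_le (x z : 𝔸) : ‖exp x * z‖ ≤ Real.exp ‖x‖ * ‖z‖ := by
  rw [exp_eq_tsum ℝ, ← (expSeries_summable' (𝕂 := ℝ) x).tsum_mul_right z]
  have hs : HasSum (fun n : ℕ => ‖x‖ ^ n / n.factorial * ‖z‖) (Real.exp ‖x‖ * ‖z‖) := by
    have := expSeries_div_hasSum_exp (‖x‖ : ℝ)
    rw [← Real.exp_eq_exp_ℝ] at this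
    exact this.mul_right _
  refine tsum_of_norm_bounded hs fun n => ?_
  rw [smul_mul_assoc, norm_smul]
  calc ‖(n.factorial : ℝ)⁻¹‖ * ‖x ^ n * z‖ ≤ (n.factorial : ℝ)⁻¹ * (‖x‖ ^ n * ‖z‖) := by
        rw [Real.norm_eq_abs, abs_of_nonneg (by positivity)]
        exact mul_le_mul_of_nonneg_left (aux_norm_pow_mul_le x z n) (by positivity)
    _ = ‖x‖ ^ n / n.factorial * ‖z‖ := by ring

lemma aux_norm_pow_sub_pow_le (x y : 𝔸) (n : ℕ) :
    ‖x ^ (n + 1) - y ^ (n + 1)‖ ≤ (n + 1) * ‖x - y‖ * (max ‖x‖ ‖y‖) ^ n := by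
  induction n with
  | zero => simp
  | succ n ih =>
    have hC : ‖x‖ ≤ max ‖x‖ ‖y‖ := le_max_left _ _
    have hC' : ‖y‖ ≤ max ‖x‖ ‖y‖ := le_max_right _ _
    have hC0 : (0:ℝ) ≤ max ‖x‖ ‖y‖ := le_trans (norm_nonneg _) hC
    have hid : x ^ (n + 2) - y ^ (n + 2)
        = x * (x ^ (n + 1) - y ^ (n + 1)) + (x - y) * y ^ (n + 1) := by
      rw [mul_sub, sub_mul, ← pow_succ' x (n + 1), ← pow_succ' y (n + 1)]
      abel
    calc ‖x ^ (n + 2) - y ^ (n + 2)‖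
        ≤ ‖x * (x ^ (n + 1) - y ^ (n + 1))‖ + ‖(x - y) * y ^ (n + 1)‖ := by
          rw [hid]; exact norm_add_le _ _
      _ ≤ ‖x‖ * ‖x ^ (n + 1) - y ^ (n + 1)‖ + ‖x - y‖ * ‖y‖ ^ (n + 1) :=
          add_le_add (norm_mul_le _ _) (le_trans (norm_mul_le _ _)
            (mul_le_mul_of_nonneg_left (norm_pow_le' y n.succ_pos) (norm_nonneg _)))
      _ ≤ (max ‖x‖ ‖y‖) * ((n + 1) * ‖x - y‖ * (max ‖x‖ ‖y‖) ^ n)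
          + ‖x - y‖ * (max ‖x‖ ‖y‖) ^ (n + 1) :=
          add_le_add
            (mul_le_mul hC ih (norm_nonneg _) hC0)
            (mul_le_mul_of_nonneg_left (pow_le_pow_left₀ (norm_nonneg _) hC' _)
              (norm_nonneg _))
      _ = ((n : ℝ) + 2) * ‖x - y‖ * (max ‖x‖ ‖y‖) ^ (n + 1) := by ring
      _ = ((n + 1 : ℕ) + 1) * ‖x - y‖ * (max ‖x‖ ‖y‖) ^ (n + 1) := by push_cast; ring

lemma aux_norm_exp_sub_exp_le (x y : 𝔸) :
    ‖exp x - exp y‖ ≤ ‖x - y‖ * Real.exp (max ‖x‖ ‖y‖) := by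
  set C := max ‖x‖ ‖y‖ with hCdef
  have hC0 : (0:ℝ) ≤ C := le_trans (norm_nonneg _) (le_max_left _ _)
  simp only [exp_eq_tsum ℝ]
  rw [← Summable.tsum_sub (expSeries_summable' (𝕂 := ℝ) x) (expSeries_summable' (𝕂 := ℝ) y)]
  set h : ℕ → ℝ := fun n => Nat.rec 0 (fun m _ => ‖x - y‖ * (C ^ m / m.factorial)) n with hh
  have hsum : HasSum h (‖x - y‖ * Real.exp C) := by
    have H : HasSum (fun n : ℕ => ‖x - y‖ * (C ^ n / n.factorial)) (‖x - y‖ * Real.exp C) := by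
      have := expSeries_div_hasSum_exp (C : ℝ)
      rw [← Real.exp_eq_exp_ℝ] at this
      exact this.mul_left _
    have : HasSum (fun n : ℕ => h (n + 1)) (‖x - y‖ * Real.exp C) := H
    rw [hasSum_nat_add_iff 1] at this
    have h0 : h 0 = 0 := rfl
    rw [Finset.sum_range_one, h0, add_zero] at this
    exact this
  refine tsum_of_norm_bounded hsum fun n => ?_
  match n with
  | 0 => simp [hh]
  | n + 1 =>
    have key := aux_norm_pow_sub_pow_le x y n
    have : ((n+1).factorial : ℝ)⁻¹ * ((n + 1) * ‖x - y‖ * C ^ n)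
        = ‖x - y‖ * (C ^ n / n.factorial) := by
      rw [Nat.factorial_succ]
      push_cast
      rw [mul_inv]
      field_simp
    calc ‖(((n+1).factorial : ℝ)⁻¹) • x ^ (n+1) - (((n+1).factorial : ℝ)⁻¹) • y ^ (n+1)‖
        = ((n+1).factorial : ℝ)⁻¹ * ‖x ^ (n+1) - y ^ (n+1)‖ := by
          rw [← smul_sub, norm_smul, Real.norm_eq_abs, abs_of_nonneg (by positivity)]
      _ ≤ ((n+1).factorial : ℝ)⁻¹ * ((n + 1) * ‖x - y‖ * C ^ n) := by
          exact mul_le_mul_of_nonneg_left key (by positivity)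
      _ = h (n + 1) := this

lemma aux_norm_mul_pow_le (x z : 𝔸) : ∀ n : ℕ, ‖z * x ^ n‖ ≤ ‖z‖ * ‖x‖ ^ n
  | 0 => by simp
  | n + 1 => by
    calc ‖z * x ^ (n + 1)‖ = ‖z * x ^ n * x‖ := by rw [pow_succ, mul_assoc]
      _ ≤ ‖z * x ^ n‖ * ‖x‖ := norm_mul_le _ _
      _ ≤ ‖z‖ * ‖x‖ ^ n * ‖x‖ :=
          mul_le_mul_of_nonneg_right (aux_norm_mul_pow_le x z n) (norm_nonneg _)
      _ = ‖z‖ * ‖x‖ ^ (n + 1) := by ring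

lemma aux_norm_mul_exp_le (z x : 𝔸) : ‖z * exp x‖ ≤ ‖z‖ * Real.exp ‖x‖ := by
  rw [exp_eq_tsum ℝ, ← (expSeries_summable' (𝕂 := ℝ) x).tsum_mul_left z]
  have hs : HasSum (fun n : ℕ => ‖z‖ * (‖x‖ ^ n / n.factorial)) (‖z‖ * Real.exp ‖x‖) := by
    have := expSeries_div_hasSum_exp (‖x‖ : ℝ)
    rw [← Real.exp_eq_exp_ℝ] at this
    exact this.mul_left _
  refine tsum_of_norm_bounded hs fun n => ?_
  rw [mul_smul_comm, norm_smul]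
  calc ‖(n.factorial : ℝ)⁻¹‖ * ‖z * x ^ n‖ ≤ (n.factorial : ℝ)⁻¹ * (‖z‖ * ‖x‖ ^ n) := by
        rw [Real.norm_eq_abs, abs_of_nonneg (by positivity)]
        exact mul_le_mul_of_nonneg_left (aux_norm_mul_pow_le x z n) (by positivity)
    _ = ‖z‖ * (‖x‖ ^ n / n.factorial) := by ring


end AuxLemmas

/-- bound on the difference of ordered products of matrix exponentials
(in a real Banach algebra, e.g. n×n matrices with a submultiplicative norm; larger
indices multiply on the left). -/
theorem stmt_3 {𝔸 : Type*} [NormedRing 𝔸] [NormedAlgebra ℝ 𝔸] [CompleteSpace 𝔸]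
    {l k : ℕ} (A A' : Fin (l + 1) → 𝔸) (ε_A M D : ℝ)
    (hε : 0 ≤ ε_A) (hM : 0 ≤ M)
    (hA : ∀ i, ‖A i - A' i‖ ≤ ε_A) (hA' : ∀ i, ‖A' i‖ ≤ M)
    (hD : 0 < D) (s : ℕ → ℝ) (hs0 : s 0 = 0)
    (hmono : ∀ i ≤ k, s i ≤ s (i + 1)) (hsD : s (k + 1) = D)
    (m : ℕ → Fin (l + 1)) :
    ‖((List.range (k + 1)).reverse.map
        (fun n => exp ((s (n + 1) - s n) • A (m (n + 1))))).prod -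
      ((List.range (k + 1)).reverse.map
        (fun n => exp ((s (n + 1) - s n) • A' (m (n + 1))))).prod‖ ≤
      ε_A * (k + 1) * D * Real.exp (M * s (k + 1)) * Real.exp (ε_A * D) := by
  set T : ℕ → (Fin (l + 1) → 𝔸) → 𝔸 := fun j B =>
    ((List.range (j + 1)).reverse.map
      (fun n => exp ((s (n + 1) - s n) • B (m (n + 1))))).prod with hT
  have hTsucc : ∀ (j : ℕ) (B : Fin (l + 1) → 𝔸),
      T (j + 1) B = exp ((s (j + 2) - s (j + 1)) • B (m (j + 2))) * T j B := by
    intro j B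
    simp [hT, List.range_succ]
  have hT0 : ∀ B : Fin (l + 1) → 𝔸, T 0 B = exp ((s 1 - s 0) • B (m 1)) := by
    intro B; simp [hT, List.range_succ]
  have hs_nonneg : ∀ j, j ≤ k + 1 → 0 ≤ s j := by
    intro j hj
    induction j with
    | zero => rw [hs0]
    | succ i ih => exact le_trans (ih (by omega)) (hmono i (by omega))
  -- norm of right-multiplication by the primed product
  have hN : ∀ j, j ≤ k → ∀ W : 𝔸, ‖W * T j A'‖ ≤ ‖W‖ * Real.exp (M * s (j + 1)) := by
    intro j
    induction j with
    | zero =>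
      intro hj W
      rw [hT0]
      refine (aux_norm_mul_exp_le W _).trans ?_
      have h1 : ‖(s 1 - s 0) • A' (m 1)‖ ≤ M * s 1 := by
        rw [norm_smul, Real.norm_eq_abs, hs0, sub_zero,
          abs_of_nonneg (hs0 ▸ hmono 0 (by omega))]
        calc s 1 * ‖A' (m 1)‖ ≤ s 1 * M :=
              mul_le_mul_of_nonneg_left (hA' _) (hs0 ▸ hmono 0 (by omega))
          _ = M * s 1 := mul_comm _ _
      exact mul_le_mul_of_nonneg_left (Real.exp_le_exp.mpr h1) (norm_nonneg _)
    | succ j ih =>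
      intro hj W
      rw [hTsucc, ← mul_assoc]
      have hδ : 0 ≤ s (j + 2) - s (j + 1) := sub_nonneg.mpr (hmono (j + 1) hj)
      have h1 : ‖(s (j + 2) - s (j + 1)) • A' (m (j + 2))‖ ≤ M * (s (j + 2) - s (j + 1)) := by
        rw [norm_smul, Real.norm_eq_abs, abs_of_nonneg hδ, mul_comm M _]
        exact mul_le_mul_of_nonneg_left (hA' _) hδ
      calc ‖W * exp ((s (j + 2) - s (j + 1)) • A' (m (j + 2))) * T j A'‖
          ≤ ‖W * exp ((s (j + 2) - s (j + 1)) • A' (m (j + 2)))‖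
            * Real.exp (M * s (j + 1)) := ih (by omega) _
        _ ≤ ‖W‖ * Real.exp (M * (s (j + 2) - s (j + 1))) * Real.exp (M * s (j + 1)) := by
            refine mul_le_mul_of_nonneg_right ?_ (Real.exp_pos _).le
            exact (aux_norm_mul_exp_le W _).trans
              (mul_le_mul_of_nonneg_left (Real.exp_le_exp.mpr h1) (norm_nonneg _))
        _ = ‖W‖ * Real.exp (M * s (j + 2)) := by
            rw [mul_assoc, ← Real.exp_add]
            ring_nf
  -- main bound by induction
  have hP : ∀ j, j ≤ k → ‖T j A - T j A'‖ ≤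
      ε_A * (j + 1 : ℝ) * s (j + 1) * Real.exp ((M + ε_A) * s (j + 1)) := by
    intro j
    induction j with
    | zero =>
      intro hj
      rw [hT0, hT0]
      have hs1 : 0 ≤ s 1 := hs0 ▸ hmono 0 (by omega)
      have hdiff : ‖(s 1 - s 0) • A (m 1) - (s 1 - s 0) • A' (m 1)‖ ≤ ε_A * s 1 := by
        rw [← smul_sub, norm_smul, Real.norm_eq_abs, hs0, sub_zero, abs_of_nonneg hs1,
          mul_comm ε_A (s 1)]
        exact mul_le_mul_of_nonneg_left (hA _) hs1
      have hmax : max ‖(s 1 - s 0) • A (m 1)‖ ‖(s 1 - s 0) • A' (m 1)‖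
          ≤ (M + ε_A) * s 1 := by
        rw [hs0, sub_zero]
        refine max_le ?_ ?_
        · have : A (m 1) = A' (m 1) + (A (m 1) - A' (m 1)) := by abel
          rw [norm_smul, Real.norm_eq_abs, abs_of_nonneg hs1, this]
          calc s 1 * ‖A' (m 1) + (A (m 1) - A' (m 1))‖
              ≤ s 1 * (M + ε_A) := by
                refine mul_le_mul_of_nonneg_left ?_ hs1
                exact (norm_add_le _ _).trans (add_le_add (hA' _) (hA _))
            _ = (M + ε_A) * s 1 := mul_comm _ _
        · rw [norm_smul, Real.norm_eq_abs, abs_of_nonneg hs1]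
          calc s 1 * ‖A' (m 1)‖ ≤ s 1 * (M + ε_A) :=
                mul_le_mul_of_nonneg_left ((hA' _).trans (by linarith)) hs1
            _ = (M + ε_A) * s 1 := mul_comm _ _
      calc ‖exp ((s 1 - s 0) • A (m 1)) - exp ((s 1 - s 0) • A' (m 1))‖
          ≤ ‖(s 1 - s 0) • A (m 1) - (s 1 - s 0) • A' (m 1)‖
            * Real.exp (max ‖(s 1 - s 0) • A (m 1)‖ ‖(s 1 - s 0) • A' (m 1)‖) :=
            aux_norm_exp_sub_exp_le _ _
        _ ≤ (ε_A * s 1) * Real.exp ((M + ε_A) * s 1) := by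
            exact mul_le_mul hdiff (Real.exp_le_exp.mpr hmax) (Real.exp_pos _).le
              (by positivity)
        _ = ε_A * ((0 : ℕ) + 1 : ℝ) * s (0 + 1) * Real.exp ((M + ε_A) * s (0 + 1)) := by
            push_cast; norm_num
    | succ j ihP =>
      intro hj
      have hjk : j ≤ k := by omega
      have hδ : 0 ≤ s (j + 2) - s (j + 1) := sub_nonneg.mpr (hmono (j + 1) hj)
      have hs1 : 0 ≤ s (j + 1) := hs_nonneg _ (by omega)
      have hs2 : 0 ≤ s (j + 2) := hs_nonneg _ (by omega)
      set δ := s (j + 2) - s (j + 1) with hδdef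
      set X := δ • A (m (j + 2)) with hX
      set Y := δ • A' (m (j + 2)) with hY
      have hXY : ‖X - Y‖ ≤ ε_A * δ := by
        rw [hX, hY, ← smul_sub, norm_smul, Real.norm_eq_abs, abs_of_nonneg hδ, mul_comm ε_A δ]
        exact mul_le_mul_of_nonneg_left (hA _) hδ
      have hYn : ‖Y‖ ≤ M * δ := by
        rw [hY, norm_smul, Real.norm_eq_abs, abs_of_nonneg hδ, mul_comm M δ]
        exact mul_le_mul_of_nonneg_left (hA' _) hδ
      have hXn : ‖X‖ ≤ (M + ε_A) * δ := by
        have : X = Y + (X - Y) := by abel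
        rw [this]
        calc ‖Y + (X - Y)‖ ≤ ‖Y‖ + ‖X - Y‖ := norm_add_le _ _
          _ ≤ M * δ + ε_A * δ := add_le_add hYn hXY
          _ = (M + ε_A) * δ := by ring
      have hmax : max ‖X‖ ‖Y‖ ≤ (M + ε_A) * δ :=
        max_le hXn (hYn.trans (by nlinarith))
      have key : T (j + 1) A - T (j + 1) A'
          = exp X * (T j A - T j A') + (exp X - exp Y) * T j A' := by
        rw [hTsucc, hTsucc, ← hX, ← hY]
        noncomm_ring
      have t1 : ‖exp X * (T j A - T j A')‖
          ≤ Real.exp ((M + ε_A) * δ)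
            * (ε_A * (j + 1 : ℝ) * s (j + 1) * Real.exp ((M + ε_A) * s (j + 1))) := by
        refine (aux_norm_exp_mul_le _ _).trans ?_
        exact mul_le_mul (Real.exp_le_exp.mpr hXn) (ihP hjk) (norm_nonneg _)
          (Real.exp_pos _).le
      have t2 : ‖(exp X - exp Y) * T j A'‖
          ≤ (ε_A * δ * Real.exp ((M + ε_A) * δ)) * Real.exp (M * s (j + 1)) := by
        refine (hN j hjk _).trans ?_
        refine mul_le_mul_of_nonneg_right ?_ (Real.exp_pos _).le
        refine (aux_norm_exp_sub_exp_le _ _).trans ?_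
        exact mul_le_mul hXY (Real.exp_le_exp.mpr hmax) (Real.exp_pos _).le
          (by positivity)
      have e1 : Real.exp ((M + ε_A) * δ) * Real.exp ((M + ε_A) * s (j + 1))
          = Real.exp ((M + ε_A) * s (j + 2)) := by
        rw [← Real.exp_add, hδdef]; ring_nf
      have e2 : Real.exp ((M + ε_A) * δ) * Real.exp (M * s (j + 1))
          ≤ Real.exp ((M + ε_A) * s (j + 2)) := by
        rw [← Real.exp_add]
        refine Real.exp_le_exp.mpr ?_
        rw [hδdef]
        nlinarith
      calc ‖T (j + 1) A - T (j + 1) A'‖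
          ≤ ‖exp X * (T j A - T j A')‖ + ‖(exp X - exp Y) * T j A'‖ := by
            rw [key]; exact norm_add_le _ _
        _ ≤ Real.exp ((M + ε_A) * δ)
              * (ε_A * (j + 1 : ℝ) * s (j + 1) * Real.exp ((M + ε_A) * s (j + 1)))
            + (ε_A * δ * Real.exp ((M + ε_A) * δ)) * Real.exp (M * s (j + 1)) :=
            add_le_add t1 t2
        _ ≤ ε_A * (j + 1 : ℝ) * s (j + 1) * Real.exp ((M + ε_A) * s (j + 2))
            + ε_A * δ * Real.exp ((M + ε_A) * s (j + 2)) := by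
            refine add_le_add (le_of_eq ?_) ?_
            · rw [← e1]; ring
            · rw [mul_assoc]
              exact mul_le_mul_of_nonneg_left e2 (by positivity)
        _ = (ε_A * (j + 1 : ℝ) * s (j + 1) + ε_A * δ)
              * Real.exp ((M + ε_A) * s (j + 2)) := by ring
        _ ≤ (ε_A * ((j : ℝ) + 1 + 1) * s (j + 2))
              * Real.exp ((M + ε_A) * s (j + 2)) := by
            have hle : s (j + 1) ≤ s (j + 2) := hmono (j + 1) hj
            refine mul_le_mul_of_nonneg_right ?_ (Real.exp_pos _).le
            rw [hδdef]
            nlinarith [mul_nonneg hε hs2, mul_nonneg hε (sub_nonneg.mpr hle),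
              mul_nonneg (mul_nonneg hε (Nat.cast_nonneg j : (0:ℝ) ≤ j)) (sub_nonneg.mpr hle)]
        _ = ε_A * ((j : ℝ) + 1 + 1) * s (j + 2) * Real.exp ((M + ε_A) * s (j + 2)) := by
            ring
        _ = ε_A * ((j + 1 : ℕ) + 1 : ℝ) * s (j + 1 + 1)
              * Real.exp ((M + ε_A) * s (j + 1 + 1)) := by
            push_cast; ring_nf
  have final := hP k le_rfl
  have hsk : s (k + 1) = D := hsD
  rw [hsk] at final
  refine final.trans (le_of_eq ?_)
  rw [hsk]
  have h3 : (M + ε_A) * D = M * D + ε_A * D := by ring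
  rw [h3, Real.exp_add]
  ring
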